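/- arXiv:math/0411606 — 3 statements merged into one kernel-verified Lean document; each statement's English description precedes it below -/
import Mathlib

section
/- If r, x, y, z are positive real numbers satisfying r²(x + y + z) = xyz, then the numbers a = y + z, b = x + z, c = x + y satisfy the strict triangle inequalities a < b + c, b < a + c, c < a + b, their sum is a + b + c = 2(x + y + z), and 16·(r(x + y + z))² = (a+b+c)(−a+b+c)(a−b+c)(a+b−c); that is, (a, b, c) forms a triangle with perimeter 2(x+y+z), area r(x+y+z), and inradius r. -/
/-- If `r, x, y, z` are positive reals with `r²(x+y+z) = xyz`, then `a = y+z`, `b = x+z`,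
`c = x+y` form a triangle with perimeter `2(x+y+z)`, area `r(x+y+z)` (via Heron's formula)
and inradius `r`. -/
theorem stmt_2 (r x y z : ℝ) (hr : 0 < r) (hx : 0 < x) (hy : 0 < y) (hz : 0 < z)
    (hsurf : r ^ 2 * (x + y + z) = x * y * z) :
    let a := y + z
    let b := x + z
    let c := x + y
    a < b + c ∧ b < a + c ∧ c < a + b ∧
    a + b + c = 2 * (x + y + z) ∧
    16 * (r * (x + y + z)) ^ 2 =
      (a + b + c) * (-a + b + c) * (a - b + c) * (a + b - c) ∧
    2 * (r * (x + y + z)) / (a + b + c) = r := by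
  intro a b c
  have hs : (0:ℝ) < x + y + z := by linarith
  refine ⟨by simp only [a,b,c]; linarith, by simp only [a,b,c]; linarith,
    by simp only [a,b,c]; linarith, by simp only [a,b,c]; ring, ?_, ?_⟩
  · simp only [a, b, c]
    have : (y+z + (x+z) + (x+y)) * (-(y+z) + (x+z) + (x+y)) * ((y+z) - (x+z) + (x+y)) *
        ((y+z) + (x+z) - (x+y)) = 16 * (x*y*z) * (x+y+z) := by ring
    rw [this, ← hsurf]; ring
  · simp only [a, b, c]
    rw [show y+z+(x+z)+(x+y) = 2*(x+y+z) by ring]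
    field_simp
end

section
/- Let F = RatFunc ℚ with s the generator X, and let W be the Weierstrass curve y² = (x − 4(s−1)²)³ + s²(s+1)²x² over F, i.e. with coefficients a₁ = a₃ = 0, a₂ = s²(s+1)² − 12(s−1)², a₄ = 48(s−1)⁴, a₆ = −64(s−1)⁶. Then the point P with affine coordinates (4(s−1)², 4s(s+1)(s−1)²) satisfies P ≠ 0 and 3 • P = 0; that is, P has additive order 3 in the group of F-points of W. -/
open WeierstrassCurve

/-- The generator `s = X` of `ℚ(s) = RatFunc ℚ`. -/
noncomputable def s : RatFunc ℚ := RatFunc.X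

/-- The Weierstrass curve `y² = (x − 4(s−1)²)³ + s²(s+1)²x²` over `ℚ(s)`, a Weierstrass model
of the generic fiber of the elliptic K3 surface `Y → C`. -/
noncomputable def W : WeierstrassCurve.Affine (RatFunc ℚ) where
  a₁ := 0
  a₂ := s ^ 2 * (s + 1) ^ 2 - 12 * (s - 1) ^ 2
  a₃ := 0
  a₄ := 48 * (s - 1) ^ 4
  a₆ := -64 * (s - 1) ^ 6

lemma s_ne_zero : s ≠ 0 := RatFunc.X_ne_zero

lemma ratfunc_two_ne_zero : (2 : RatFunc ℚ) ≠ 0 := by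
  intro h
  have h2 : algebraMap ℚ (RatFunc ℚ) 2 = algebraMap ℚ (RatFunc ℚ) 0 := by simpa using h
  have := (algebraMap ℚ (RatFunc ℚ)).injective h2
  norm_num at this

lemma ratfunc_four_ne_zero : (4 : RatFunc ℚ) ≠ 0 := by
  intro h
  have h2 : algebraMap ℚ (RatFunc ℚ) 4 = algebraMap ℚ (RatFunc ℚ) 0 := by simpa using h
  have := (algebraMap ℚ (RatFunc ℚ)).injective h2
  norm_num at this

lemma s_add_one_ne_zero : s + 1 ≠ 0 := by
  have : s + 1 = algebraMap (Polynomial ℚ) (RatFunc ℚ) (Polynomial.X + 1) := by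
    simp [s, RatFunc.algebraMap_X]
  rw [this]
  exact RatFunc.algebraMap_ne_zero (by
    intro h
    have := congrArg (Polynomial.coeff · 1) h
    simp [Polynomial.coeff_one] at this)

lemma s_sub_one_ne_zero : s - 1 ≠ 0 := by
  have : s - 1 = algebraMap (Polynomial ℚ) (RatFunc ℚ) (Polynomial.X - 1) := by
    simp [s, RatFunc.algebraMap_X]
  rw [this]
  exact RatFunc.algebraMap_ne_zero (by
    intro h
    have := congrArg (Polynomial.coeff · 1) h
    simp [Polynomial.coeff_one] at this)

open Classical in
/-- The point `P = (4(s−1)², 4s(s+1)(s−1)²)` has additive order `3` in the group of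
`ℚ(s)`-points of `W`. -/
theorem stmt_8 (hP : W.Nonsingular (4 * (s - 1) ^ 2) (4 * s * (s + 1) * (s - 1) ^ 2)) :
    WeierstrassCurve.Affine.Point.some _ _ hP ≠ 0 ∧
      3 • WeierstrassCurve.Affine.Point.some _ _ hP = 0 := by
  set x : RatFunc ℚ := 4 * (s - 1) ^ 2 with hxdef
  set y : RatFunc ℚ := 4 * s * (s + 1) * (s - 1) ^ 2 with hydef
  have hy0 : y ≠ 0 := by
    simp only [hydef]
    exact mul_ne_zero (mul_ne_zero (mul_ne_zero ratfunc_four_ne_zero s_ne_zero) s_add_one_ne_zero)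
      (pow_ne_zero _ s_sub_one_ne_zero)
  have hnegY : W.negY x y = -y := by
    simp [Affine.negY, W]
  have hy_ne : y ≠ W.negY x y := by
    rw [hnegY]
    intro h
    have h2 : (2 : RatFunc ℚ) * y = 0 := by linear_combination h
    rcases mul_eq_zero.mp h2 with h' | h'
    · exact ratfunc_two_ne_zero h'
    · exact hy0 h'
  have hslope : W.slope x x y y = s * (s + 1) := by
    rw [Affine.slope_of_Y_ne rfl hy_ne, hnegY]
    have hden : y - -y ≠ 0 := by
      intro h
      apply hy0
      have : (2 : RatFunc ℚ) * y = 0 := by linear_combination h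
      rcases mul_eq_zero.mp this with h' | h'
      · exact absurd h' ratfunc_two_ne_zero
      · exact h'
    rw [div_eq_iff hden]
    simp only [W, hxdef, hydef]
    ring
  have hx : W.addX x x (W.slope x x y y) = x := by
    rw [hslope, Affine.addX]
    simp only [W, hxdef]
    ring
  have hy2 : W.addY x x y (W.slope x x y y) = -y := by
    rw [Affine.addY, Affine.negAddY, hx, hslope]
    simp only [Affine.negY, W]
    ring
  constructor
  · intro h
    exact Affine.Point.some_ne_zero hP h
  · have h3 : (3 : ℕ) • Affine.Point.some _ _ hP =
        (Affine.Point.some _ _ hP + Affine.Point.some _ _ hP) + Affine.Point.some _ _ hP := by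
      rw [show (3 : ℕ) = 2 + 1 by rfl, add_nsmul, two_nsmul, one_nsmul]
    rw [h3, Affine.Point.add_of_Y_ne hy_ne]
    exact Affine.Point.add_of_Y_eq hx (by rw [hy2, hnegY])
end

section
/- Let F = RatFunc ℚ with s the generator X, and let W be the Weierstrass curve y² = (x − 4(s−1)²)³ + s²(s+1)²x² over F, with the points P = (4(s−1)², 4s(s+1)(s−1)²) and R = (8 − 8s, 8s² − 8). Then the point 2 • R + P of W over F is an affine point, and its x-coordinate equals 4(s⁴ − 6s³ + 10s² − 2s + 1)/(s − 1)². -/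
open WeierstrassCurve

private lemma some_congr {F : Type*} [Field F] {W' : WeierstrassCurve.Affine F}
    {x y x' y' : F} (h : W'.Nonsingular x y) (hx : x = x') (hy : y = y') :
    ∃ h' : W'.Nonsingular x' y',
      WeierstrassCurve.Affine.Point.some _ _ h = WeierstrassCurve.Affine.Point.some _ _ h' := by
  subst hx; subst hy; exact ⟨h, rfl⟩

private lemma pol_ne_zero {p : Polynomial ℚ} (hp : Polynomial.eval 0 p ≠ 0) :
    algebraMap (Polynomial ℚ) (RatFunc ℚ) p ≠ 0 :=
  RatFunc.algebraMap_ne_zero (fun h => hp (by rw [h]; simp))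

open Classical in
/-- For the points `P = (4(s−1)², 4s(s+1)(s−1)²)` and `R = (8 − 8s, 8s² − 8)` of `W`, the
point `2 • R + P` is an affine point with `x`-coordinate `4(s⁴ − 6s³ + 10s² − 2s + 1)/(s−1)²`. -/
theorem stmt_10 (hP : W.Nonsingular (4 * (s - 1) ^ 2) (4 * s * (s + 1) * (s - 1) ^ 2))
    (hR : W.Nonsingular (8 - 8 * s) (8 * s ^ 2 - 8)) :
    ∃ (x y : RatFunc ℚ) (h : W.Nonsingular x y),
      2 • WeierstrassCurve.Affine.Point.some _ _ hR + WeierstrassCurve.Affine.Point.some _ _ hP =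
        WeierstrassCurve.Affine.Point.some _ _ h ∧
      x = 4 * (s ^ 4 - 6 * s ^ 3 + 10 * s ^ 2 - 2 * s + 1) / (s - 1) ^ 2 := by
  -- nonzero denominators
  have hs1 : (s - 1 : RatFunc ℚ) ≠ 0 := by
    have h : (s - 1 : RatFunc ℚ) = algebraMap (Polynomial ℚ) (RatFunc ℚ) (Polynomial.X - 1) := by
      simp [s, RatFunc.algebraMap_X]
    rw [h]; exact pol_ne_zero (by norm_num)
  have hs2 : (s + 1 : RatFunc ℚ) ≠ 0 := by
    have h : (s + 1 : RatFunc ℚ) = algebraMap (Polynomial ℚ) (RatFunc ℚ) (Polynomial.X + 1) := by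
      simp [s, RatFunc.algebraMap_X]
    rw [h]; exact pol_ne_zero (by norm_num)
  have hq : (s ^ 6 - 4 * s ^ 5 + 3 * s ^ 4 + 4 * s ^ 3 - 5 * s ^ 2 + 1 : RatFunc ℚ) ≠ 0 := by
    have h : (s ^ 6 - 4 * s ^ 5 + 3 * s ^ 4 + 4 * s ^ 3 - 5 * s ^ 2 + 1 : RatFunc ℚ) =
        algebraMap (Polynomial ℚ) (RatFunc ℚ)
          (Polynomial.X ^ 6 - 4 * Polynomial.X ^ 5 + 3 * Polynomial.X ^ 4 +
            4 * Polynomial.X ^ 3 - 5 * Polynomial.X ^ 2 + 1) := by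
      simp [s, RatFunc.algebraMap_X, map_ofNat]
    rw [h]; exact pol_ne_zero (by norm_num)
  have h16ne : (16 : RatFunc ℚ) ≠ 0 := by
    have h : (16 : RatFunc ℚ) = algebraMap (Polynomial ℚ) (RatFunc ℚ) 16 := by
      simp [map_ofNat]
    rw [h]; exact pol_ne_zero (by norm_num)
  -- doubling of R
  have hyR : (8 * s ^ 2 - 8 : RatFunc ℚ) ≠ W.negY (8 - 8 * s) (8 * s ^ 2 - 8) := by
    simp only [WeierstrassCurve.Affine.negY, W]
    intro h
    apply hs1
    have h16 : (16 : RatFunc ℚ) * ((s - 1) * (s + 1)) = 0 := by linear_combination h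
    rcases mul_eq_zero.mp ((mul_eq_zero.mp h16).resolve_left h16ne) with h' | h'
    · exact h'
    · exact absurd h' hs2
  have h2R := WeierstrassCurve.Affine.Point.add_self_of_Y_ne (h₁ := hR) hyR
  have hL1 : W.slope (8 - 8 * s) (8 - 8 * s) (8 * s ^ 2 - 8) (8 * s ^ 2 - 8) =
      -s ^ 3 + 2 * s ^ 2 - 3 := by
    rw [WeierstrassCurve.Affine.slope_of_Y_ne rfl hyR]
    simp only [WeierstrassCurve.Affine.negY, W]
    rw [div_eq_iff (by
      intro h
      apply hs1
      have h16 : (16 : RatFunc ℚ) * ((s - 1) * (s + 1)) = 0 := by linear_combination h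
      rcases mul_eq_zero.mp ((mul_eq_zero.mp h16).resolve_left h16ne) with h' | h'
      · exact h'
      · exact absurd h' hs2)]
    ring
  -- explicit coordinates of 2R
  have hDx : W.addX (8 - 8 * s) (8 - 8 * s)
      (W.slope (8 - 8 * s) (8 - 8 * s) (8 * s ^ 2 - 8) (8 * s ^ 2 - 8)) =
      s ^ 6 - 4 * s ^ 5 + 3 * s ^ 4 + 4 * s ^ 3 - s ^ 2 - 8 * s + 5 := by
    rw [hL1]
    simp only [WeierstrassCurve.Affine.addX, W]
    ring
  have hDy : W.addY (8 - 8 * s) (8 - 8 * s) (8 * s ^ 2 - 8)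
      (W.slope (8 - 8 * s) (8 - 8 * s) (8 * s ^ 2 - 8) (8 * s ^ 2 - 8)) =
      s ^ 9 - 6 * s ^ 8 + 11 * s ^ 7 + s ^ 6 - 21 * s ^ 5 + 11 * s ^ 4 + 9 * s ^ 3
        - 5 * s ^ 2 - 1 := by
    rw [WeierstrassCurve.Affine.addY, WeierstrassCurve.Affine.negAddY, hL1]
    simp only [WeierstrassCurve.Affine.negY, WeierstrassCurve.Affine.addX, W]
    ring
  obtain ⟨hD, h2R'⟩ := some_congr (WeierstrassCurve.Affine.nonsingular_add hR hR fun h => hyR h.2)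
    hDx hDy
  -- addition of 2R and P
  have hxDP : (s ^ 6 - 4 * s ^ 5 + 3 * s ^ 4 + 4 * s ^ 3 - s ^ 2 - 8 * s + 5 : RatFunc ℚ) ≠
      4 * (s - 1) ^ 2 := by
    intro h
    apply hq
    linear_combination h
  have hadd := WeierstrassCurve.Affine.Point.add_of_X_ne (h₁ := hD) (h₂ := hP) hxDP
  have hL2 : W.slope (s ^ 6 - 4 * s ^ 5 + 3 * s ^ 4 + 4 * s ^ 3 - s ^ 2 - 8 * s + 5)
      (4 * (s - 1) ^ 2)
      (s ^ 9 - 6 * s ^ 8 + 11 * s ^ 7 + s ^ 6 - 21 * s ^ 5 + 11 * s ^ 4 + 9 * s ^ 3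
        - 5 * s ^ 2 - 1)
      (4 * s * (s + 1) * (s - 1) ^ 2) =
      (s ^ 9 - 6 * s ^ 8 + 11 * s ^ 7 + s ^ 6 - 21 * s ^ 5 + 7 * s ^ 4 + 13 * s ^ 3
        - s ^ 2 - 4 * s - 1) /
      (s ^ 6 - 4 * s ^ 5 + 3 * s ^ 4 + 4 * s ^ 3 - 5 * s ^ 2 + 1) := by
    rw [WeierstrassCurve.Affine.slope_of_X_ne hxDP]
    rw [div_eq_div_iff (by intro h; exact hq (by linear_combination h)) hq]
    ring
  have hSx : W.addX (s ^ 6 - 4 * s ^ 5 + 3 * s ^ 4 + 4 * s ^ 3 - s ^ 2 - 8 * s + 5)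
      (4 * (s - 1) ^ 2)
      (W.slope (s ^ 6 - 4 * s ^ 5 + 3 * s ^ 4 + 4 * s ^ 3 - s ^ 2 - 8 * s + 5)
        (4 * (s - 1) ^ 2)
        (s ^ 9 - 6 * s ^ 8 + 11 * s ^ 7 + s ^ 6 - 21 * s ^ 5 + 11 * s ^ 4 + 9 * s ^ 3
          - 5 * s ^ 2 - 1)
        (4 * s * (s + 1) * (s - 1) ^ 2)) =
      4 * (s ^ 4 - 6 * s ^ 3 + 10 * s ^ 2 - 2 * s + 1) / (s - 1) ^ 2 := by
    rw [hL2]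
    simp only [WeierstrassCurve.Affine.addX, W]
    generalize hQd : (s ^ 6 - 4 * s ^ 5 + 3 * s ^ 4 + 4 * s ^ 3 - 5 * s ^ 2 + 1 : RatFunc ℚ) = q at hq ⊢
    field_simp
    rw [← hQd]
    ring
  set Sy := W.addY (s ^ 6 - 4 * s ^ 5 + 3 * s ^ 4 + 4 * s ^ 3 - s ^ 2 - 8 * s + 5)
      (4 * (s - 1) ^ 2)
      (s ^ 9 - 6 * s ^ 8 + 11 * s ^ 7 + s ^ 6 - 21 * s ^ 5 + 11 * s ^ 4 + 9 * s ^ 3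
        - 5 * s ^ 2 - 1)
      (W.slope (s ^ 6 - 4 * s ^ 5 + 3 * s ^ 4 + 4 * s ^ 3 - s ^ 2 - 8 * s + 5)
        (4 * (s - 1) ^ 2)
        (s ^ 9 - 6 * s ^ 8 + 11 * s ^ 7 + s ^ 6 - 21 * s ^ 5 + 11 * s ^ 4 + 9 * s ^ 3
          - 5 * s ^ 2 - 1)
        (4 * s * (s + 1) * (s - 1) ^ 2)) with hSy
  obtain ⟨hS, hadd'⟩ := some_congr
    (WeierstrassCurve.Affine.nonsingular_add hD hP fun h => hxDP h.1) hSx rfl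
  refine ⟨4 * (s ^ 4 - 6 * s ^ 3 + 10 * s ^ 2 - 2 * s + 1) / (s - 1) ^ 2, Sy, hS, ?_, rfl⟩
  rw [two_smul, h2R, h2R', hadd, hadd']
end
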